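/- In the setting of a Lie algebra g with A₄-action and coordinate algebra (A,*), the component δ₂ satisfies δ₂(x,y) = l_y r_x − l_x r_y; explicitly, δ₂(x,y)(z) = y*(z*x) − x*(z*y) for all x,y,z ∈ A. -/

import Mathlib

/-- The embedding `ιᵢ = φ^i ∘ ι₀` of the coordinate space `A = g₀` into `g`. -/
def iota {F : Type*} [Field F] {g : Type*} [LieRing g] [LieAlgebra F g]
    (φ : g →ₗ⁅F⁆ g) (A : Submodule F g) (i : ZMod 3) (x : A) : g :=
  (fun z => φ z)^[i.val] (x : g)

/-- In a Lie algebra with `A₄`-action and coordinate algebra `(A,*)`,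
`δ₂(x,y)(z) = y*(z*x) − x*(z*y)`. -/
theorem stmt6
    (F : Type*) [Field F] (hchar : (2 : F) ≠ 0)
    (g : Type*) [LieRing g] [LieAlgebra F g]
    (τ₁ τ₂ φ : g →ₗ⁅F⁆ g)
    (hτ₁ : ∀ x, τ₁ (τ₁ x) = x) (hτ₂ : ∀ x, τ₂ (τ₂ x) = x)
    (hcomm : ∀ x, τ₁ (τ₂ x) = τ₂ (τ₁ x))
    (hφ3 : ∀ x, φ (φ (φ x)) = x)
    (hrel1 : ∀ x, φ (τ₁ x) = τ₂ (φ x))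
    (hrel2 : ∀ x, φ (τ₂ x) = τ₁ (τ₂ (φ x)))
    (A : Submodule F g)
    (hA : A = Module.End.eigenspace (τ₁ : g →ₗ[F] g) 1 ⊓
              Module.End.eigenspace (τ₂ : g →ₗ[F] g) (-1))
    (δ : ZMod 3 → A → A → A → A)
    (hδ : ∀ (i : ZMod 3) (x y z : A),
      ⁅⁅iota φ A 0 x, iota φ A 0 y⁆, iota φ A i z⁆ = iota φ A i (δ i x y z))
    (mul : A →ₗ[F] A →ₗ[F] A)
    (hmul : ∀ (i : ZMod 3) (x y : A),
      ⁅iota φ A i x, iota φ A (i + 1) y⁆ = iota φ A (i + 2) (mul x y))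
    :
    ∀ x y z : A, δ 2 x y z = mul y (mul z x) - mul x (mul z y) := by

  intro x y z
  have h201 : ((2 : ZMod 3) + 1) = 0 := by decide
  have h202 : ((2 : ZMod 3) + 2) = 1 := by decide
  have h001 : ((0 : ZMod 3) + 1) = 1 := by decide
  have h002 : ((0 : ZMod 3) + 2) = 2 := by decide
  have hi2 : ∀ a : A, iota φ A 2 a = φ (φ (a : g)) := by
    intro a
    have : (2 : ZMod 3).val = 2 := rfl
    simp [iota, this]
  have hinj : ∀ a b : A, iota φ A 2 a = iota φ A 2 b → a = b := by
    intro a b h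
    rw [hi2, hi2] at h
    have h' := congrArg φ h
    rw [hφ3, hφ3] at h'
    exact Subtype.ext h'
  apply hinj
  have key := hδ 2 x y z
  have hzy := hmul 2 z y
  rw [h201, h202] at hzy
  have hzx := hmul 2 z x
  rw [h201, h202] at hzx
  have hxm := hmul 0 x (mul z y)
  rw [h001, h002] at hxm
  have hym := hmul 0 y (mul z x)
  rw [h001, h002] at hym
  have hlie : ⁅⁅iota φ A 0 x, iota φ A 0 y⁆, iota φ A 2 z⁆
      = ⁅iota φ A 0 x, ⁅iota φ A 0 y, iota φ A 2 z⁆⁆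
        - ⁅iota φ A 0 y, ⁅iota φ A 0 x, iota φ A 2 z⁆⁆ := by
    rw [lie_lie]
  have e1 : ⁅iota φ A 0 y, iota φ A 2 z⁆ = - iota φ A 1 (mul z y) := by
    rw [← hzy, lie_skew]
  have e2 : ⁅iota φ A 0 x, iota φ A 2 z⁆ = - iota φ A 1 (mul z x) := by
    rw [← hzx, lie_skew]
  rw [key, e1, e2, lie_neg, lie_neg, hxm, hym] at hlie
  rw [hlie, hi2, hi2, hi2]
  have hc : ((mul y (mul z x) - mul x (mul z y) : A) : g)
      = ((mul y (mul z x) : A) : g) - ((mul x (mul z y) : A) : g) := rfl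
  rw [hc, map_sub, map_sub]
  abel
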